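/- Let E be a Banach space and for n ≥ 1 define on Eⁿ the maximal operator sequence norm: ‖x‖ₙ = inf{ ‖α‖ · (Σ_{j=1}^m ‖y_j‖²)^{1/2} : m ∈ ℕ, α ∈ M_{n,m}, y ∈ Eᵐ, x = αy }. Then this is a sequential norm on E: it satisfies ‖[x;0]‖_{m+n} = ‖x‖ₘ, ‖[x;y]‖²_{m+n} ≤ ‖x‖ₘ² + ‖y‖ₙ², and ‖βx‖ₘ ≤ ‖β‖‖x‖ₙ for β ∈ M_{m,n}, and ‖·‖₁ agrees with the norm of E. -/

import Mathlib

open Matrix MeasureTheory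

noncomputable section

/-- Action of a scalar `m × n` matrix on a column of vectors in `E`. -/
def matVec {E : Type*} [AddCommMonoid E] [Module ℂ E] {m n : ℕ}
    (α : Matrix (Fin m) (Fin n) ℂ) (x : Fin n → E) : Fin m → E :=
  fun i => ∑ j, α i j • x j

/-- Operator norm of a scalar matrix viewed as a map `ℓ²ₙ → ℓ²ₘ`. -/
noncomputable def matOpNorm {m n : ℕ} (α : Matrix (Fin m) (Fin n) ℂ) : ℝ :=
  ‖LinearMap.toContinuousLinearMap (Matrix.toEuclideanLin α)‖

/-- A sequential norm over a normed space `E`: a norm on each `Eⁿ`, agreeing with the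
norm of `E` at level one, and satisfying the three axioms of an operator sequence space. -/
structure SeqNorm (E : Type*) [NormedAddCommGroup E] [NormedSpace ℂ E] where
  N : ∀ n : ℕ, (Fin n → E) → ℝ
  norm_one : ∀ x : Fin 1 → E, N 1 x = ‖x 0‖
  add_le : ∀ (n : ℕ) (x y : Fin n → E), N n (x + y) ≤ N n x + N n y
  smul_eq : ∀ (n : ℕ) (c : ℂ) (x : Fin n → E), N n (c • x) = ‖c‖ * N n x
  eq_zero : ∀ (n : ℕ) (x : Fin n → E), N n x = 0 → x = 0
  append_zero : ∀ (m n : ℕ) (x : Fin m → E),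
    N (m + n) (Fin.append x (0 : Fin n → E)) = N m x
  append_sq : ∀ (m n : ℕ) (x : Fin m → E) (y : Fin n → E),
    N (m + n) (Fin.append x y) ^ 2 ≤ N m x ^ 2 + N n y ^ 2
  matrix_le : ∀ (m n : ℕ) (α : Matrix (Fin m) (Fin n) ℂ) (x : Fin n → E),
    N m (matVec α x) ≤ matOpNorm α * N n x

/-- The minimal operator sequence norm at level `n`:
`‖x‖ₙ = sup{ ‖Σⱼ ξⱼ xⱼ‖ : ξ ∈ ℓ²ₙ, ‖ξ‖₂ ≤ 1 }`, identifying `min(E)ⁿ = B(ℓ²ₙ, E)`. -/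
noncomputable def minSeqNorm {E : Type*} [NormedAddCommGroup E] [NormedSpace ℂ E]
    (n : ℕ) (x : Fin n → E) : ℝ :=
  sSup {r : ℝ | ∃ ξ : Fin n → ℂ, (∑ j, ‖ξ j‖ ^ 2) ≤ 1 ∧ r = ‖∑ j, ξ j • x j‖}

/-- The maximal operator sequence norm at level `n`:
`‖x‖ₙ = inf{ ‖α‖ (Σⱼ ‖yⱼ‖²)^{1/2} : x = αy }`. -/
noncomputable def maxSeqNorm {E : Type*} [NormedAddCommGroup E] [NormedSpace ℂ E]
    (n : ℕ) (x : Fin n → E) : ℝ :=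
  sInf {r : ℝ | ∃ (m : ℕ) (α : Matrix (Fin n) (Fin m) ℂ) (y : Fin m → E),
    x = matVec α y ∧ r = matOpNorm α * Real.sqrt (∑ j, ‖y j‖ ^ 2)}

namespace MaxAux

variable {E : Type*} [NormedAddCommGroup E] [NormedSpace ℂ E]
set_option linter.unusedSectionVars false

/-! ### `vnorm`: the ℓ²-norm of a column of vectors -/

def vnorm {k : ℕ} (y : Fin k → E) : ℝ := Real.sqrt (∑ j, ‖y j‖ ^ 2)

lemma vnorm_nonneg {k : ℕ} (y : Fin k → E) : 0 ≤ vnorm y := Real.sqrt_nonneg _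

lemma vnorm_sq {k : ℕ} (y : Fin k → E) : vnorm y ^ 2 = ∑ j, ‖y j‖ ^ 2 :=
  Real.sq_sqrt (by positivity)

lemma vnorm_smul {k : ℕ} (c : ℂ) (y : Fin k → E) : vnorm (c • y) = ‖c‖ * vnorm y := by
  unfold vnorm
  rw [← Real.sqrt_sq (norm_nonneg c), ← Real.sqrt_mul (by positivity), Finset.mul_sum]
  congr 1
  refine Finset.sum_congr rfl fun j _ => ?_
  simp [Pi.smul_apply, norm_smul, mul_pow]

lemma vnorm_append_sq {k l : ℕ} (y : Fin k → E) (z : Fin l → E) :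
    vnorm (Fin.append y z) ^ 2 = vnorm y ^ 2 + vnorm z ^ 2 := by
  rw [vnorm_sq, vnorm_sq, vnorm_sq, Fin.sum_univ_add]
  simp [Fin.append_left, Fin.append_right]

/-! ### basic facts about `matOpNorm` -/

lemma matOpNorm_nonneg {m n : ℕ} (α : Matrix (Fin m) (Fin n) ℂ) : 0 ≤ matOpNorm α :=
  norm_nonneg _

lemma mulVec_norm_le {m n : ℕ} (α : Matrix (Fin m) (Fin n) ℂ) (ξ : EuclideanSpace ℂ (Fin n)) :
    ‖((WithLp.equiv 2 _).symm (α.mulVec ξ) : EuclideanSpace ℂ (Fin m))‖ ≤ matOpNorm α * ‖ξ‖ := by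
  have := (LinearMap.toContinuousLinearMap (Matrix.toEuclideanLin α)).le_opNorm ξ
  simpa [Matrix.toEuclideanLin_apply, matOpNorm] using this

lemma mulVec_norm_le' {m n : ℕ} (α : Matrix (Fin m) (Fin n) ℂ) (ξ : Fin n → ℂ) :
    ‖((WithLp.equiv 2 _).symm (α.mulVec ξ) : EuclideanSpace ℂ (Fin m))‖
      ≤ matOpNorm α * ‖((WithLp.equiv 2 _).symm ξ : EuclideanSpace ℂ (Fin n))‖ :=
  mulVec_norm_le α _

lemma mulVec_vnorm_le {m n : ℕ} (α : Matrix (Fin m) (Fin n) ℂ) (ξ : Fin n → ℂ) :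
    vnorm (α.mulVec ξ) ≤ matOpNorm α * vnorm ξ := by
  have h := mulVec_norm_le' α ξ
  have e1 : ‖((WithLp.equiv 2 _).symm (α.mulVec ξ) : EuclideanSpace ℂ (Fin m))‖
      = vnorm (α.mulVec ξ) := by rw [EuclideanSpace.norm_eq]; rfl
  have e2 : ‖((WithLp.equiv 2 _).symm ξ : EuclideanSpace ℂ (Fin n))‖ = vnorm ξ := by
    rw [EuclideanSpace.norm_eq]; rfl
  rw [e1, e2] at h
  exact h

lemma mulVec_sq_sum_le {m n : ℕ} (α : Matrix (Fin m) (Fin n) ℂ) (ξ : Fin n → ℂ) :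
    ∑ i, ‖α.mulVec ξ i‖ ^ 2 ≤ matOpNorm α ^ 2 * ∑ j, ‖ξ j‖ ^ 2 := by
  have h := mulVec_vnorm_le α ξ
  have := pow_le_pow_left₀ (vnorm_nonneg _) h 2
  rw [mul_pow, vnorm_sq, vnorm_sq] at this
  exact this

lemma matOpNorm_le_of_sq {m n : ℕ} {α : Matrix (Fin m) (Fin n) ℂ} {c : ℝ} (hc : 0 ≤ c)
    (h : ∀ ξ : Fin n → ℂ, ∑ i, ‖α.mulVec ξ i‖ ^ 2 ≤ c ^ 2 * ∑ j, ‖ξ j‖ ^ 2) :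
    matOpNorm α ≤ c := by
  apply ContinuousLinearMap.opNorm_le_bound _ hc
  intro ξ
  have h2 : ‖(LinearMap.toContinuousLinearMap (Matrix.toEuclideanLin α)) ξ‖ ^ 2
      = ∑ i, ‖α.mulVec (WithLp.equiv 2 _ ξ) i‖ ^ 2 := by
    simp only [LinearMap.coe_toContinuousLinearMap', Matrix.toEuclideanLin_apply]
    rw [EuclideanSpace.norm_eq, Real.sq_sqrt (by positivity)]
    rfl
  have h3 : ‖ξ‖ ^ 2 = ∑ j, ‖(WithLp.equiv 2 _ ξ) j‖ ^ 2 := by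
    rw [EuclideanSpace.norm_eq, Real.sq_sqrt (by positivity)]
    rfl
  have := h (WithLp.equiv 2 _ ξ)
  nlinarith [norm_nonneg ((LinearMap.toContinuousLinearMap (Matrix.toEuclideanLin α)) ξ),
    mul_nonneg hc (norm_nonneg ξ),
    sq_nonneg (‖(LinearMap.toContinuousLinearMap (Matrix.toEuclideanLin α)) ξ‖ - c * ‖ξ‖)]

lemma matOpNorm_le_of_vnorm {m n : ℕ} {α : Matrix (Fin m) (Fin n) ℂ} {c : ℝ} (hc : 0 ≤ c)
    (h : ∀ ξ : Fin n → ℂ, vnorm (α.mulVec ξ) ≤ c * vnorm ξ) :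
    matOpNorm α ≤ c := by
  refine matOpNorm_le_of_sq hc fun ξ => ?_
  have := pow_le_pow_left₀ (vnorm_nonneg _) (h ξ) 2
  rw [mul_pow, vnorm_sq, vnorm_sq] at this
  exact this

lemma row_sq_le {m n : ℕ} (α : Matrix (Fin m) (Fin n) ℂ) (i : Fin m) :
    ∑ j, ‖α i j‖ ^ 2 ≤ matOpNorm α ^ 2 := by
  set ξ : Fin n → ℂ := fun j => starRingEnd ℂ (α i j) with hξ
  have hsum : ∑ j, ‖ξ j‖ ^ 2 = ∑ j, ‖α i j‖ ^ 2 := by simp [hξ]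
  have hval : α.mulVec ξ i = (↑(∑ j, ‖α i j‖ ^ 2) : ℂ) := by
    simp only [mulVec, dotProduct, hξ]
    push_cast
    congr 1
    funext j
    rw [Complex.mul_conj']
  set S := ∑ j, ‖α i j‖ ^ 2 with hS
  have hS0 : 0 ≤ S := by positivity
  have h1 : ‖α.mulVec ξ i‖ ^ 2 ≤ ∑ i', ‖α.mulVec ξ i'‖ ^ 2 :=
    Finset.single_le_sum (f := fun i' => ‖α.mulVec ξ i'‖ ^ 2) (fun _ _ => by positivity)
      (Finset.mem_univ i)
  have h2 := mulVec_sq_sum_le α ξ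
  have h3 : ‖α.mulVec ξ i‖ = S := by rw [hval]; simp [abs_of_nonneg hS0]
  have h4 : S ^ 2 ≤ matOpNorm α ^ 2 * S := by
    calc S ^ 2 = ‖α.mulVec ξ i‖ ^ 2 := by rw [h3]
      _ ≤ _ := le_trans (le_trans h1 h2) (by rw [hsum])
  rcases eq_or_lt_of_le hS0 with h | h
  · rw [← h]; positivity
  · nlinarith

/-- The pointwise bound: each entry of `αy` has norm at most `‖α‖ ⬝ ‖y‖₂`. -/
lemma norm_matVec_le {m n : ℕ} (α : Matrix (Fin m) (Fin n) ℂ) (y : Fin n → E) (i : Fin m) :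
    ‖matVec α y i‖ ≤ matOpNorm α * vnorm y := by
  have h1 : ‖matVec α y i‖ ≤ ∑ j, ‖α i j‖ * ‖y j‖ := by
    refine (norm_sum_le _ _).trans ?_
    refine Finset.sum_le_sum fun j _ => ?_
    rw [norm_smul]
  have h2 : (∑ j, ‖α i j‖ * ‖y j‖) ^ 2 ≤ (∑ j, ‖α i j‖ ^ 2) * ∑ j, ‖y j‖ ^ 2 :=
    Finset.sum_mul_sq_le_sq_mul_sq _ _ _
  have h3 : (∑ j, ‖α i j‖ * ‖y j‖) ^ 2 ≤ matOpNorm α ^ 2 * vnorm y ^ 2 := by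
    refine h2.trans ?_
    rw [vnorm_sq]
    exact mul_le_mul_of_nonneg_right (row_sq_le α i) (by positivity)
  have h4 : ∑ j, ‖α i j‖ * ‖y j‖ ≤ matOpNorm α * vnorm y := by
    nlinarith [Finset.sum_nonneg (fun j (_ : j ∈ Finset.univ) =>
      mul_nonneg (norm_nonneg (α i j)) (norm_nonneg (y j))),
      mul_nonneg (matOpNorm_nonneg α) (vnorm_nonneg y)]
  exact h1.trans h4

/-! ### algebraic lemmas about `matVec` -/

lemma matVec_one {n : ℕ} (x : Fin n → E) : matVec (1 : Matrix (Fin n) (Fin n) ℂ) x = x := by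
  funext i
  simp [matVec, Matrix.one_apply, ite_smul]

lemma matVec_zero_left {m n : ℕ} (y : Fin n → E) :
    matVec (0 : Matrix (Fin m) (Fin n) ℂ) y = 0 := by
  funext i; simp [matVec]

lemma matVec_mul {m n k : ℕ} (β : Matrix (Fin m) (Fin n) ℂ) (α : Matrix (Fin n) (Fin k) ℂ)
    (y : Fin k → E) : matVec (β * α) y = matVec β (matVec α y) := by
  funext i
  simp only [matVec, Matrix.mul_apply, Finset.sum_smul, Finset.smul_sum, mul_smul]
  rw [Finset.sum_comm]

lemma matVec_smul_left {m n : ℕ} (c : ℂ) (α : Matrix (Fin m) (Fin n) ℂ) (y : Fin n → E) :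
    matVec (c • α) y = c • matVec α y := by
  funext i
  simp [matVec, Finset.smul_sum, smul_smul, Matrix.smul_apply]

lemma matVec_smul_right {m n : ℕ} (c : ℂ) (α : Matrix (Fin m) (Fin n) ℂ) (y : Fin n → E) :
    matVec α (c • y) = c • matVec α y := by
  funext i
  simp only [matVec, Pi.smul_apply, Finset.smul_sum]
  exact Finset.sum_congr rfl fun j _ => smul_comm _ _ _

lemma matOpNorm_smul {m n : ℕ} (c : ℂ) (α : Matrix (Fin m) (Fin n) ℂ) :
    matOpNorm (c • α) = ‖c‖ * matOpNorm α := by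
  unfold matOpNorm
  rw [_root_.map_smul, _root_.map_smul]
  exact norm_smul c (LinearMap.toContinuousLinearMap (Matrix.toEuclideanLin α))

lemma matOpNorm_one_le {n : ℕ} : matOpNorm (1 : Matrix (Fin n) (Fin n) ℂ) ≤ 1 := by
  refine matOpNorm_le_of_sq (by norm_num) fun ξ => ?_
  simp [Matrix.one_mulVec]

lemma matOpNorm_mul_le {m n k : ℕ} (β : Matrix (Fin m) (Fin n) ℂ)
    (α : Matrix (Fin n) (Fin k) ℂ) : matOpNorm (β * α) ≤ matOpNorm β * matOpNorm α := by
  refine matOpNorm_le_of_vnorm (mul_nonneg (matOpNorm_nonneg β) (matOpNorm_nonneg α)) fun ξ => ?_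
  have h1 : (β * α).mulVec ξ = β.mulVec (α.mulVec ξ) := (Matrix.mulVec_mulVec _ _ _).symm
  rw [h1]
  calc vnorm (β.mulVec (α.mulVec ξ)) ≤ matOpNorm β * vnorm (α.mulVec ξ) := mulVec_vnorm_le _ _
    _ ≤ matOpNorm β * (matOpNorm α * vnorm ξ) :=
        mul_le_mul_of_nonneg_left (mulVec_vnorm_le _ _) (matOpNorm_nonneg β)
    _ = matOpNorm β * matOpNorm α * vnorm ξ := by ring

/-! ### block matrices -/

def hcat {n m₁ m₂ : ℕ} (α : Matrix (Fin n) (Fin m₁) ℂ) (β : Matrix (Fin n) (Fin m₂) ℂ) :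
    Matrix (Fin n) (Fin (m₁ + m₂)) ℂ :=
  Matrix.of fun i => Fin.append (α i) (β i)

def vcat {m₁ m₂ n : ℕ} (α : Matrix (Fin m₁) (Fin n) ℂ) (β : Matrix (Fin m₂) (Fin n) ℂ) :
    Matrix (Fin (m₁ + m₂)) (Fin n) ℂ :=
  Matrix.of (Fin.append α β)

lemma matVec_hcat {n m₁ m₂ : ℕ} (α : Matrix (Fin n) (Fin m₁) ℂ) (β : Matrix (Fin n) (Fin m₂) ℂ)
    (y : Fin m₁ → E) (z : Fin m₂ → E) :
    matVec (hcat α β) (Fin.append y z) = matVec α y + matVec β z := by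
  funext i
  simp [matVec, hcat, Fin.sum_univ_add, Fin.append_left, Fin.append_right]

lemma matVec_vcat {m₁ m₂ n : ℕ} (α : Matrix (Fin m₁) (Fin n) ℂ) (β : Matrix (Fin m₂) (Fin n) ℂ)
    (y : Fin n → E) :
    matVec (vcat α β) y = Fin.append (matVec α y) (matVec β y) := by
  funext i
  refine Fin.addCases (fun i => ?_) (fun i => ?_) i
  · simp [matVec, vcat, Fin.append_left (u := (α : Fin m₁ → Fin n → ℂ)) (v := (β : Fin m₂ → Fin n → ℂ))]
  · simp [matVec, vcat, Fin.append_right (u := (α : Fin m₁ → Fin n → ℂ)) (v := (β : Fin m₂ → Fin n → ℂ))]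

lemma mulVec_vcat {m₁ m₂ n : ℕ} (α : Matrix (Fin m₁) (Fin n) ℂ) (β : Matrix (Fin m₂) (Fin n) ℂ)
    (ξ : Fin n → ℂ) :
    (vcat α β).mulVec ξ = Fin.append (α.mulVec ξ) (β.mulVec ξ) := by
  funext i
  refine Fin.addCases (fun i => ?_) (fun i => ?_) i
  · simp [Matrix.mulVec, vcat, Fin.append_left (u := (α : Fin m₁ → Fin n → ℂ)) (v := (β : Fin m₂ → Fin n → ℂ))]
  · simp [Matrix.mulVec, vcat, Fin.append_right (u := (α : Fin m₁ → Fin n → ℂ)) (v := (β : Fin m₂ → Fin n → ℂ))]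

lemma mulVec_hcat {n m₁ m₂ : ℕ} (α : Matrix (Fin n) (Fin m₁) ℂ) (β : Matrix (Fin n) (Fin m₂) ℂ)
    (ξ : Fin (m₁ + m₂) → ℂ) :
    (hcat α β).mulVec ξ = α.mulVec (fun j => ξ (Fin.castAdd m₂ j))
      + β.mulVec (fun j => ξ (Fin.natAdd m₁ j)) := by
  funext i
  simp [Matrix.mulVec, dotProduct, hcat, Fin.sum_univ_add, Fin.append_left, Fin.append_right]

lemma vnorm_sq_split {m₁ m₂ : ℕ} (ξ : Fin (m₁ + m₂) → ℂ) :
    vnorm ξ ^ 2 = vnorm (fun j => ξ (Fin.castAdd m₂ j)) ^ 2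
      + vnorm (fun j => ξ (Fin.natAdd m₁ j)) ^ 2 := by
  simp only [vnorm_sq (E := ℂ)]
  exact Fin.sum_univ_add _

/-- The norm of a horizontal concatenation is at most `√(‖α‖² + ‖β‖²)`. -/
lemma matOpNorm_hcat_le {n m₁ m₂ : ℕ} (α : Matrix (Fin n) (Fin m₁) ℂ)
    (β : Matrix (Fin n) (Fin m₂) ℂ) :
    matOpNorm (hcat α β) ≤ Real.sqrt (matOpNorm α ^ 2 + matOpNorm β ^ 2) := by
  refine matOpNorm_le_of_vnorm (Real.sqrt_nonneg _) fun ξ => ?_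
  rw [mulVec_hcat]
  set ξ₁ : Fin m₁ → ℂ := fun j => ξ (Fin.castAdd m₂ j) with hξ₁
  set ξ₂ : Fin m₂ → ℂ := fun j => ξ (Fin.natAdd m₁ j) with hξ₂
  have h0 : vnorm (α.mulVec ξ₁ + β.mulVec ξ₂) ≤ vnorm (α.mulVec ξ₁) + vnorm (β.mulVec ξ₂) := by
    have heq : ((WithLp.equiv 2 (Fin n → ℂ)).symm (α.mulVec ξ₁ + β.mulVec ξ₂)
        : EuclideanSpace ℂ (Fin n))
        = (WithLp.equiv 2 _).symm (α.mulVec ξ₁) + (WithLp.equiv 2 _).symm (β.mulVec ξ₂) := rfl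
    have tri := norm_add_le ((WithLp.equiv 2 (Fin n → ℂ)).symm (α.mulVec ξ₁)
      : EuclideanSpace ℂ (Fin n)) ((WithLp.equiv 2 (Fin n → ℂ)).symm (β.mulVec ξ₂))
    have e0 : ‖((WithLp.equiv 2 (Fin n → ℂ)).symm (α.mulVec ξ₁ + β.mulVec ξ₂)
        : EuclideanSpace ℂ (Fin n))‖ = vnorm (α.mulVec ξ₁ + β.mulVec ξ₂) := by
      rw [EuclideanSpace.norm_eq]; rfl
    have e1 : ‖((WithLp.equiv 2 (Fin n → ℂ)).symm (α.mulVec ξ₁) : EuclideanSpace ℂ (Fin n))‖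
        = vnorm (α.mulVec ξ₁) := by rw [EuclideanSpace.norm_eq]; rfl
    have e2 : ‖((WithLp.equiv 2 (Fin n → ℂ)).symm (β.mulVec ξ₂) : EuclideanSpace ℂ (Fin n))‖
        = vnorm (β.mulVec ξ₂) := by rw [EuclideanSpace.norm_eq]; rfl
    rw [e1, e2] at tri
    rw [← e0]
    exact le_of_eq_of_le (congrArg norm heq) tri
  have h1 : vnorm (α.mulVec ξ₁) ≤ matOpNorm α * vnorm ξ₁ := mulVec_vnorm_le _ _
  have h2 : vnorm (β.mulVec ξ₂) ≤ matOpNorm β * vnorm ξ₂ := mulVec_vnorm_le _ _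
  have hCS : matOpNorm α * vnorm ξ₁ + matOpNorm β * vnorm ξ₂
      ≤ Real.sqrt (matOpNorm α ^ 2 + matOpNorm β ^ 2) * vnorm ξ := by
    have hsplit := vnorm_sq_split (m₁ := m₁) (m₂ := m₂) ξ
    have hle : (matOpNorm α * vnorm ξ₁ + matOpNorm β * vnorm ξ₂) ^ 2
        ≤ (matOpNorm α ^ 2 + matOpNorm β ^ 2) * vnorm ξ ^ 2 := by
      rw [hsplit]
      nlinarith [sq_nonneg (matOpNorm α * vnorm ξ₂ - matOpNorm β * vnorm ξ₁),
        matOpNorm_nonneg α, matOpNorm_nonneg β, vnorm_nonneg ξ₁, vnorm_nonneg ξ₂]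
    have hl : 0 ≤ matOpNorm α * vnorm ξ₁ + matOpNorm β * vnorm ξ₂ := by
      have := matOpNorm_nonneg α; have := matOpNorm_nonneg β
      have := vnorm_nonneg ξ₁; have := vnorm_nonneg ξ₂
      positivity
    have hr : 0 ≤ Real.sqrt (matOpNorm α ^ 2 + matOpNorm β ^ 2) * vnorm ξ :=
      mul_nonneg (Real.sqrt_nonneg _) (vnorm_nonneg ξ)
    nlinarith [Real.sq_sqrt (show (0:ℝ) ≤ matOpNorm α ^ 2 + matOpNorm β ^ 2 by positivity),
      sq_nonneg (matOpNorm α * vnorm ξ₁ + matOpNorm β * vnorm ξ₂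
        - Real.sqrt (matOpNorm α ^ 2 + matOpNorm β ^ 2) * vnorm ξ)]
  calc vnorm (α.mulVec ξ₁ + β.mulVec ξ₂) ≤ vnorm (α.mulVec ξ₁) + vnorm (β.mulVec ξ₂) := h0
    _ ≤ matOpNorm α * vnorm ξ₁ + matOpNorm β * vnorm ξ₂ := add_le_add h1 h2
    _ ≤ _ := hCS

/-- Sum-of-squares identity for vertical concatenation. -/
lemma mulVec_vcat_sq {m₁ m₂ n : ℕ} (α : Matrix (Fin m₁) (Fin n) ℂ)
    (β : Matrix (Fin m₂) (Fin n) ℂ) (ξ : Fin n → ℂ) :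
    ∑ i, ‖(vcat α β).mulVec ξ i‖ ^ 2
      = ∑ i, ‖α.mulVec ξ i‖ ^ 2 + ∑ i, ‖β.mulVec ξ i‖ ^ 2 := by
  rw [mulVec_vcat, Fin.sum_univ_add]
  simp [Fin.append_left, Fin.append_right]

lemma matOpNorm_vcat_zero_le {m₁ m₂ n : ℕ} (α : Matrix (Fin m₁) (Fin n) ℂ) :
    matOpNorm (vcat α (0 : Matrix (Fin m₂) (Fin n) ℂ)) ≤ matOpNorm α := by
  refine matOpNorm_le_of_sq (matOpNorm_nonneg α) fun ξ => ?_
  rw [mulVec_vcat_sq]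
  simp only [Matrix.zero_mulVec]
  simpa using mulVec_sq_sum_le α ξ

lemma matOpNorm_zero_vcat_le {m₁ m₂ n : ℕ} (β : Matrix (Fin m₂) (Fin n) ℂ) :
    matOpNorm (vcat (0 : Matrix (Fin m₁) (Fin n) ℂ) β) ≤ matOpNorm β := by
  refine matOpNorm_le_of_sq (matOpNorm_nonneg β) fun ξ => ?_
  rw [mulVec_vcat_sq]
  simp only [Matrix.zero_mulVec]
  simpa using mulVec_sq_sum_le β ξ

/-- Norm bound for a block-diagonal matrix. -/
lemma matOpNorm_dblock_le {m₁ m₂ n₁ n₂ : ℕ} (α : Matrix (Fin m₁) (Fin n₁) ℂ)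
    (β : Matrix (Fin m₂) (Fin n₂) ℂ) :
    matOpNorm (vcat (hcat α 0) (hcat 0 β)) ≤ max (matOpNorm α) (matOpNorm β) := by
  have hmax : 0 ≤ max (matOpNorm α) (matOpNorm β) :=
    le_trans (matOpNorm_nonneg α) (le_max_left _ _)
  refine matOpNorm_le_of_sq hmax fun ξ => ?_
  set ξ₁ : Fin n₁ → ℂ := fun j => ξ (Fin.castAdd n₂ j)
  set ξ₂ : Fin n₂ → ℂ := fun j => ξ (Fin.natAdd n₁ j)
  rw [mulVec_vcat_sq, mulVec_hcat, mulVec_hcat]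
  simp only [Matrix.zero_mulVec, add_zero, zero_add]
  have h1 : ∑ i, ‖α.mulVec ξ₁ i‖ ^ 2 ≤ matOpNorm α ^ 2 * ∑ j, ‖ξ₁ j‖ ^ 2 := mulVec_sq_sum_le α ξ₁
  have h2 : ∑ i, ‖β.mulVec ξ₂ i‖ ^ 2 ≤ matOpNorm β ^ 2 * ∑ j, ‖ξ₂ j‖ ^ 2 := mulVec_sq_sum_le β ξ₂
  have hsplit : ∑ j, ‖ξ j‖ ^ 2 = ∑ j, ‖ξ₁ j‖ ^ 2 + ∑ j, ‖ξ₂ j‖ ^ 2 := Fin.sum_univ_add _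
  have ha : matOpNorm α ^ 2 ≤ max (matOpNorm α) (matOpNorm β) ^ 2 :=
    pow_le_pow_left₀ (matOpNorm_nonneg α) (le_max_left _ _) 2
  have hb : matOpNorm β ^ 2 ≤ max (matOpNorm α) (matOpNorm β) ^ 2 :=
    pow_le_pow_left₀ (matOpNorm_nonneg β) (le_max_right _ _) 2
  have s1 : (0:ℝ) ≤ ∑ j, ‖ξ₁ j‖ ^ 2 := by positivity
  have s2 : (0:ℝ) ≤ ∑ j, ‖ξ₂ j‖ ^ 2 := by positivity
  rw [hsplit]
  nlinarith

/-! ### the set in the definition of `maxSeqNorm` -/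

def FSet (n : ℕ) (x : Fin n → E) : Set ℝ :=
  {r : ℝ | ∃ (m : ℕ) (α : Matrix (Fin n) (Fin m) ℂ) (y : Fin m → E),
    x = matVec α y ∧ r = matOpNorm α * Real.sqrt (∑ j, ‖y j‖ ^ 2)}

lemma maxSeqNorm_eq (n : ℕ) (x : Fin n → E) : maxSeqNorm n x = sInf (FSet n x) := rfl

lemma mem_FSet {n m : ℕ} {x : Fin n → E} {α : Matrix (Fin n) (Fin m) ℂ} {y : Fin m → E}
    (h : x = matVec α y) : matOpNorm α * vnorm y ∈ FSet n x :=
  ⟨m, α, y, h, rfl⟩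

lemma FSet_nonempty {n : ℕ} (x : Fin n → E) : (FSet n x).Nonempty :=
  ⟨_, mem_FSet (matVec_one x).symm⟩

lemma FSet_nonneg {n : ℕ} (x : Fin n → E) : ∀ r ∈ FSet n x, 0 ≤ r := by
  rintro r ⟨m, α, y, -, rfl⟩
  exact mul_nonneg (matOpNorm_nonneg α) (Real.sqrt_nonneg _)

lemma FSet_bddBelow {n : ℕ} (x : Fin n → E) : BddBelow (FSet n x) :=
  ⟨0, fun r hr => FSet_nonneg x r hr⟩

lemma maxSeqNorm_nonneg {n : ℕ} (x : Fin n → E) : 0 ≤ maxSeqNorm n x :=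
  le_csInf (FSet_nonempty x) (FSet_nonneg x)

lemma maxSeqNorm_le {n m : ℕ} {x : Fin n → E} {α : Matrix (Fin n) (Fin m) ℂ} {y : Fin m → E}
    (h : x = matVec α y) : maxSeqNorm n x ≤ matOpNorm α * vnorm y :=
  csInf_le (FSet_bddBelow x) (mem_FSet h)

lemma norm_le_maxSeqNorm {n : ℕ} (x : Fin n → E) (i : Fin n) : ‖x i‖ ≤ maxSeqNorm n x := by
  refine le_csInf (FSet_nonempty x) ?_
  rintro r ⟨m, α, y, hx, rfl⟩
  rw [hx]
  exact norm_matVec_le α y i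

lemma matOpNorm_zero {m n : ℕ} : matOpNorm (0 : Matrix (Fin m) (Fin n) ℂ) = 0 := by
  unfold matOpNorm
  rw [map_zero, map_zero, norm_zero]

lemma maxSeqNorm_zero (n : ℕ) : maxSeqNorm n (0 : Fin n → E) = 0 := by
  refine le_antisymm ?_ (maxSeqNorm_nonneg 0)
  have h : (0 : Fin n → E) = matVec (0 : Matrix (Fin n) (Fin n) ℂ) (0 : Fin n → E) :=
    (matVec_zero_left 0).symm
  have := maxSeqNorm_le h
  rwa [matOpNorm_zero, zero_mul] at this

/-- The matrix axiom. -/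
lemma maxSeqNorm_matVec_le {m n : ℕ} (β : Matrix (Fin m) (Fin n) ℂ) (x : Fin n → E) :
    maxSeqNorm m (matVec β x) ≤ matOpNorm β * maxSeqNorm n x := by
  set c := matOpNorm β with hc
  have hc0 : 0 ≤ c := matOpNorm_nonneg β
  have key : ∀ r ∈ FSet n x, maxSeqNorm m (matVec β x) ≤ c * r := by
    rintro r ⟨k, α, y, hx, rfl⟩
    have hfac : matVec β x = matVec (β * α) y := by rw [hx, matVec_mul]
    calc maxSeqNorm m (matVec β x) ≤ matOpNorm (β * α) * vnorm y := maxSeqNorm_le hfac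
      _ ≤ (c * matOpNorm α) * vnorm y :=
          mul_le_mul_of_nonneg_right (matOpNorm_mul_le β α) (vnorm_nonneg y)
      _ = c * (matOpNorm α * vnorm y) := by ring
  rcases eq_or_lt_of_le hc0 with h0 | h0
  · obtain ⟨r, hr⟩ := FSet_nonempty x
    have := key r hr
    rw [← h0] at this ⊢
    simpa using this
  · rw [maxSeqNorm_eq]
    rw [← div_le_iff₀' h0]
    refine le_csInf (FSet_nonempty x) fun r hr => ?_
    rw [div_le_iff₀' h0]
    exact key r hr

/-- Scaling a factorization by a positive real. -/
lemma scale_matVec {n k : ℕ} (α : Matrix (Fin n) (Fin k) ℂ) (y : Fin k → E) {t : ℝ}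
    (ht : 0 < t) :
    matVec α y = matVec (((t : ℝ) : ℂ) • α) ((((t⁻¹ : ℝ)) : ℂ) • y) := by
  rw [matVec_smul_left, matVec_smul_right, smul_smul]
  have : ((t : ℝ) : ℂ) * (((t⁻¹ : ℝ)) : ℂ) = 1 := by
    push_cast
    rw [mul_inv_cancel₀]
    exact_mod_cast ht.ne'
  rw [this, one_smul]

lemma matOpNorm_real_smul {m n : ℕ} (α : Matrix (Fin m) (Fin n) ℂ) {t : ℝ} (ht : 0 ≤ t) :
    matOpNorm (((t : ℝ) : ℂ) • α) = t * matOpNorm α := by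
  rw [matOpNorm_smul, Complex.norm_real, Real.norm_of_nonneg ht]

lemma vnorm_real_smul {k : ℕ} (y : Fin k → E) {t : ℝ} (ht : 0 ≤ t) :
    vnorm ((((t : ℝ)) : ℂ) • y) = t * vnorm y := by
  rw [vnorm_smul, Complex.norm_real, Real.norm_of_nonneg ht]

/-! ### append with zero -/

lemma maxSeqNorm_append_zero (m n : ℕ) (x : Fin m → E) :
    maxSeqNorm (m + n) (Fin.append x (0 : Fin n → E)) = maxSeqNorm m x := by
  refine le_antisymm ?_ ?_
  · -- every factorization of x gives one of (x, 0)
    refine le_csInf (FSet_nonempty x) ?_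
    rintro r ⟨k, α, y, hx, rfl⟩
    have hfac : Fin.append x (0 : Fin n → E) = matVec (vcat α (0 : Matrix (Fin n) (Fin k) ℂ)) y := by
      rw [matVec_vcat, matVec_zero_left, hx]
    calc maxSeqNorm (m + n) (Fin.append x (0 : Fin n → E))
        ≤ matOpNorm (vcat α (0 : Matrix (Fin n) (Fin k) ℂ)) * vnorm y := maxSeqNorm_le hfac
      _ ≤ matOpNorm α * vnorm y :=
          mul_le_mul_of_nonneg_right (matOpNorm_vcat_zero_le α) (vnorm_nonneg y)
      _ = matOpNorm α * Real.sqrt (∑ j, ‖y j‖ ^ 2) := rfl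
  · -- every factorization of (x, 0) gives one of x
    refine le_csInf (FSet_nonempty _) ?_
    rintro r ⟨k, γ, y, hx, rfl⟩
    set α : Matrix (Fin m) (Fin k) ℂ := Matrix.of fun i j => γ (Fin.castAdd n i) j with hα
    have hfac : x = matVec α y := by
      funext i
      have h1 : Fin.append x (0 : Fin n → E) (Fin.castAdd n i) = x i := Fin.append_left _ _ _
      have h2 := congrFun hx (Fin.castAdd n i)
      rw [h1] at h2
      rw [h2]
      rfl
    have hop : matOpNorm α ≤ matOpNorm γ := by
      refine matOpNorm_le_of_sq (matOpNorm_nonneg γ) fun ξ => ?_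
      have hrow : ∀ i : Fin m, α.mulVec ξ i = γ.mulVec ξ (Fin.castAdd n i) := fun i => rfl
      have h1 : ∑ i, ‖α.mulVec ξ i‖ ^ 2 = ∑ i : Fin m, ‖γ.mulVec ξ (Fin.castAdd n i)‖ ^ 2 := by
        refine Finset.sum_congr rfl fun i _ => by rw [hrow]
      have h2 : ∑ i : Fin m, ‖γ.mulVec ξ (Fin.castAdd n i)‖ ^ 2 ≤ ∑ i, ‖γ.mulVec ξ i‖ ^ 2 := by
        rw [Fin.sum_univ_add (fun i => ‖γ.mulVec ξ i‖ ^ 2)]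
        exact le_add_of_nonneg_right (by positivity)
      exact (h1.trans_le h2).trans (mulVec_sq_sum_le γ ξ)
    calc maxSeqNorm m x ≤ matOpNorm α * vnorm y := maxSeqNorm_le hfac
      _ ≤ matOpNorm γ * vnorm y := mul_le_mul_of_nonneg_right hop (vnorm_nonneg y)
      _ = matOpNorm γ * Real.sqrt (∑ j, ‖y j‖ ^ 2) := rfl

/-! ### the triangle inequality, core version -/

lemma tri_core {n k k' : ℕ} (α : Matrix (Fin n) (Fin k) ℂ) (y : Fin k → E)
    (α' : Matrix (Fin n) (Fin k') ℂ) (y' : Fin k' → E) :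
    maxSeqNorm n (matVec α y + matVec α' y')
      ≤ matOpNorm α * vnorm y + matOpNorm α' * vnorm y' := by
  set a := matOpNorm α with ha
  set b := vnorm y with hb
  set a' := matOpNorm α' with ha'
  set b' := vnorm y' with hb'
  have ha0 : 0 ≤ a := matOpNorm_nonneg α
  have hb0 : 0 ≤ b := vnorm_nonneg y
  have ha0' : 0 ≤ a' := matOpNorm_nonneg α'
  have hb0' : 0 ≤ b' := vnorm_nonneg y'
  by_cases hz : a * b = 0
  · have hx : matVec α y = 0 := by
      funext i
      have := norm_matVec_le α y i
      rw [← ha, ← hb, hz] at this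
      exact norm_le_zero_iff.mp this
    rw [hx, zero_add, hz, zero_add]
    exact maxSeqNorm_le rfl
  by_cases hz' : a' * b' = 0
  · have hx : matVec α' y' = 0 := by
      funext i
      have := norm_matVec_le α' y' i
      rw [← ha', ← hb', hz'] at this
      exact norm_le_zero_iff.mp this
    rw [hx, add_zero, hz', add_zero]
    exact maxSeqNorm_le rfl
  · have hapos : 0 < a := lt_of_le_of_ne ha0 (fun h => hz (by rw [← h, zero_mul]))
    have hbpos : 0 < b := lt_of_le_of_ne hb0 (fun h => hz (by rw [← h, mul_zero]))
    have hapos' : 0 < a' := lt_of_le_of_ne ha0' (fun h => hz' (by rw [← h, zero_mul]))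
    have hbpos' : 0 < b' := lt_of_le_of_ne hb0' (fun h => hz' (by rw [← h, mul_zero]))
    set t := Real.sqrt (b / a) with htdef
    set t' := Real.sqrt (b' / a') with htdef'
    have htpos : 0 < t := Real.sqrt_pos.mpr (div_pos hbpos hapos)
    have htpos' : 0 < t' := Real.sqrt_pos.mpr (div_pos hbpos' hapos')
    set α₁ := ((t : ℝ) : ℂ) • α
    set y₁ := (((t⁻¹ : ℝ)) : ℂ) • y
    set α₁' := ((t' : ℝ) : ℂ) • α'
    set y₁' := (((t'⁻¹ : ℝ)) : ℂ) • y'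
    have hfac : matVec α y + matVec α' y' = matVec (hcat α₁ α₁') (Fin.append y₁ y₁') := by
      rw [matVec_hcat, ← scale_matVec α y htpos, ← scale_matVec α' y' htpos']
    have hval : maxSeqNorm n (matVec α y + matVec α' y')
        ≤ matOpNorm (hcat α₁ α₁') * vnorm (Fin.append y₁ y₁') := maxSeqNorm_le hfac
    have ht2 : t ^ 2 = b / a := Real.sq_sqrt (le_of_lt (div_pos hbpos hapos))
    have ht2' : t' ^ 2 = b' / a' := Real.sq_sqrt (le_of_lt (div_pos hbpos' hapos'))
    have hA : matOpNorm α₁ ^ 2 = a * b := by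
      rw [matOpNorm_real_smul α htpos.le, mul_pow, ht2, ← ha]
      field_simp
    have hA' : matOpNorm α₁' ^ 2 = a' * b' := by
      rw [matOpNorm_real_smul α' htpos'.le, mul_pow, ht2', ← ha']
      field_simp
    have hB : vnorm y₁ ^ 2 = a * b := by
      rw [vnorm_real_smul y (inv_nonneg.mpr htpos.le), mul_pow, ← hb,
        inv_pow, ht2]
      field_simp
    have hB' : vnorm y₁' ^ 2 = a' * b' := by
      rw [vnorm_real_smul y' (inv_nonneg.mpr htpos'.le), mul_pow, ← hb',
        inv_pow, ht2']
      field_simp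
    have hop : matOpNorm (hcat α₁ α₁') ≤ Real.sqrt (a * b + a' * b') := by
      refine (matOpNorm_hcat_le α₁ α₁').trans ?_
      rw [hA, hA']
    have hvn : vnorm (Fin.append y₁ y₁') = Real.sqrt (a * b + a' * b') := by
      have h1 : vnorm (Fin.append y₁ y₁') ^ 2 = a * b + a' * b' := by
        rw [vnorm_append_sq, hB, hB']
      rw [← h1, Real.sqrt_sq (vnorm_nonneg _)]
    have hsum0 : 0 ≤ a * b + a' * b' := by positivity
    calc maxSeqNorm n (matVec α y + matVec α' y')
        ≤ matOpNorm (hcat α₁ α₁') * vnorm (Fin.append y₁ y₁') := hval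
      _ ≤ Real.sqrt (a * b + a' * b') * Real.sqrt (a * b + a' * b') := by
          rw [hvn]
          exact mul_le_mul_of_nonneg_right hop (Real.sqrt_nonneg _)
      _ = a * b + a' * b' := Real.mul_self_sqrt hsum0

/-! ### the append inequality, core version -/

lemma app_core {m n k k' : ℕ} (α : Matrix (Fin m) (Fin k) ℂ) (y : Fin k → E)
    (α' : Matrix (Fin n) (Fin k') ℂ) (y' : Fin k' → E) :
    maxSeqNorm (m + n) (Fin.append (matVec α y) (matVec α' y')) ^ 2
      ≤ (matOpNorm α * vnorm y) ^ 2 + (matOpNorm α' * vnorm y') ^ 2 := by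
  set a := matOpNorm α with ha
  set b := vnorm y with hb
  set a' := matOpNorm α' with ha'
  set b' := vnorm y' with hb'
  have ha0 : 0 ≤ a := matOpNorm_nonneg α
  have hb0 : 0 ≤ b := vnorm_nonneg y
  have ha0' : 0 ≤ a' := matOpNorm_nonneg α'
  have hb0' : 0 ≤ b' := vnorm_nonneg y'
  have hN0 : 0 ≤ maxSeqNorm (m + n) (Fin.append (matVec α y) (matVec α' y')) :=
    maxSeqNorm_nonneg _
  by_cases hz : a * b = 0
  · have hx : matVec α y = 0 := by
      funext i
      have := norm_matVec_le α y i
      rw [← ha, ← hb, hz] at this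
      exact norm_le_zero_iff.mp this
    have hfac : Fin.append (matVec α y) (matVec α' y')
        = matVec (vcat (0 : Matrix (Fin m) (Fin k') ℂ) α') y' := by
      rw [matVec_vcat, matVec_zero_left, hx]
    have h1 : maxSeqNorm (m + n) (Fin.append (matVec α y) (matVec α' y')) ≤ a' * b' := by
      refine (maxSeqNorm_le hfac).trans ?_
      exact mul_le_mul_of_nonneg_right (matOpNorm_zero_vcat_le α') (vnorm_nonneg y')
    have h2 := pow_le_pow_left₀ hN0 h1 2
    rw [mul_pow] at h2 ⊢
    nlinarith [sq_nonneg (a * b)]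
  by_cases hz' : a' * b' = 0
  · have hx : matVec α' y' = 0 := by
      funext i
      have := norm_matVec_le α' y' i
      rw [← ha', ← hb', hz'] at this
      exact norm_le_zero_iff.mp this
    have hfac : Fin.append (matVec α y) (matVec α' y')
        = matVec (vcat α (0 : Matrix (Fin n) (Fin k) ℂ)) y := by
      rw [matVec_vcat, matVec_zero_left, hx]
    have h1 : maxSeqNorm (m + n) (Fin.append (matVec α y) (matVec α' y')) ≤ a * b := by
      refine (maxSeqNorm_le hfac).trans ?_
      exact mul_le_mul_of_nonneg_right (matOpNorm_vcat_zero_le α) (vnorm_nonneg y)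
    have h2 := pow_le_pow_left₀ hN0 h1 2
    nlinarith [sq_nonneg (a' * b')]
  · have hapos : 0 < a := lt_of_le_of_ne ha0 (fun h => hz (by rw [← h, zero_mul]))
    have hapos' : 0 < a' := lt_of_le_of_ne ha0' (fun h => hz' (by rw [← h, zero_mul]))
    set c := a / a' with hcdef
    have hcpos : 0 < c := div_pos hapos hapos'
    set α₁' := ((c : ℝ) : ℂ) • α' with hα₁'
    set y₁' := (((c⁻¹ : ℝ)) : ℂ) • y' with hy₁'
    have hx' : matVec α' y' = matVec α₁' y₁' := scale_matVec α' y' hcpos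
    have hfac : Fin.append (matVec α y) (matVec α' y')
        = matVec (vcat (hcat α 0) (hcat (0 : Matrix (Fin n) (Fin k) ℂ) α₁'))
            (Fin.append y y₁') := by
      rw [matVec_vcat, matVec_hcat, matVec_hcat, matVec_zero_left, matVec_zero_left,
        add_zero, zero_add, hx']
    have hA' : matOpNorm α₁' = a := by
      rw [matOpNorm_real_smul α' hcpos.le, ← ha', hcdef]
      field_simp
    have hB' : vnorm y₁' = (a' / a) * b' := by
      rw [vnorm_real_smul y' (inv_nonneg.mpr hcpos.le), ← hb', hcdef]
      congr 1
      rw [inv_div]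
    have hop : matOpNorm (vcat (hcat α 0) (hcat (0 : Matrix (Fin n) (Fin k) ℂ) α₁')) ≤ a := by
      refine (matOpNorm_dblock_le α α₁').trans ?_
      rw [hA', ← ha, max_self]
    have hval := maxSeqNorm_le hfac
    have hvn : vnorm (Fin.append y y₁') ^ 2 = b ^ 2 + ((a' / a) * b') ^ 2 := by
      rw [vnorm_append_sq, hB', hb]
    have h1 : maxSeqNorm (m + n) (Fin.append (matVec α y) (matVec α' y'))
        ≤ a * vnorm (Fin.append y y₁') := by
      refine hval.trans ?_
      exact mul_le_mul_of_nonneg_right hop (vnorm_nonneg _)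
    have h2 := pow_le_pow_left₀ hN0 h1 2
    rw [mul_pow, hvn] at h2
    have harith : a ^ 2 * (b ^ 2 + ((a' / a) * b') ^ 2) = (a * b) ^ 2 + (a' * b') ^ 2 := by
      field_simp
    rw [harith] at h2
    exact h2

/-! ### a small sInf lemma for squares -/

lemma sq_inf_aux {S : Set ℝ} (hne : S.Nonempty) (hnn : ∀ r ∈ S, 0 ≤ r) {C : ℝ}
    (h : ∀ r ∈ S, C ≤ r ^ 2) : C ≤ sInf S ^ 2 := by
  set u := sInf S with hu_def
  have hu : 0 ≤ u := le_csInf hne hnn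
  refine le_of_forall_pos_le_add fun ε hε => ?_
  set δ := min 1 (ε / (2 * u + 1)) with hδdef
  have h2u : (0:ℝ) < 2 * u + 1 := by linarith
  have hδpos : 0 < δ := lt_min one_pos (div_pos hε h2u)
  obtain ⟨r, hr, hlt⟩ := Real.lt_sInf_add_pos hne hδpos
  have hr0 := hnn r hr
  have hδ1 : δ ≤ 1 := min_le_left _ _
  have hδ2 : δ * (2 * u + 1) ≤ ε := by
    calc δ * (2 * u + 1) ≤ (ε / (2 * u + 1)) * (2 * u + 1) :=
          mul_le_mul_of_nonneg_right (min_le_right _ _) h2u.le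
      _ = ε := div_mul_cancel₀ _ h2u.ne'
  have hC := h r hr
  have hru : r ≤ u + δ := hlt.le
  nlinarith [pow_le_pow_left₀ hr0 hru 2]

/-! ### lifted axioms -/

lemma maxSeqNorm_one' (x : Fin 1 → E) : maxSeqNorm 1 x = ‖x 0‖ := by
  refine le_antisymm ?_ (norm_le_maxSeqNorm x 0)
  have hvn : vnorm x = ‖x 0‖ := by
    unfold vnorm
    rw [Fin.sum_univ_one, Real.sqrt_sq (norm_nonneg _)]
  calc maxSeqNorm 1 x ≤ matOpNorm (1 : Matrix (Fin 1) (Fin 1) ℂ) * vnorm x :=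
        maxSeqNorm_le (matVec_one x).symm
    _ ≤ 1 * ‖x 0‖ := by
        rw [hvn]
        exact mul_le_mul_of_nonneg_right matOpNorm_one_le (norm_nonneg _)
    _ = ‖x 0‖ := one_mul _

lemma maxSeqNorm_add_le (n : ℕ) (x x' : Fin n → E) :
    maxSeqNorm n (x + x') ≤ maxSeqNorm n x + maxSeqNorm n x' := by
  have key : ∀ r ∈ FSet n x, ∀ r' ∈ FSet n x', maxSeqNorm n (x + x') ≤ r + r' := by
    rintro r ⟨k, α, y, hx, rfl⟩ r' ⟨k', α', y', hx', rfl⟩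
    have := tri_core α y α' y'
    rw [← hx, ← hx'] at this
    exact this
  have step1 : ∀ r' ∈ FSet n x', maxSeqNorm n (x + x') - r' ≤ maxSeqNorm n x := by
    intro r' h'
    rw [maxSeqNorm_eq n x]
    exact le_csInf (FSet_nonempty x) fun r h => by linarith [key r h r' h']
  have step2 : maxSeqNorm n (x + x') - maxSeqNorm n x ≤ maxSeqNorm n x' := by
    rw [maxSeqNorm_eq n x']
    exact le_csInf (FSet_nonempty x') fun r' h' => by linarith [step1 r' h']
  linarith

lemma maxSeqNorm_append_sq (m n : ℕ) (x : Fin m → E) (x' : Fin n → E) :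
    maxSeqNorm (m + n) (Fin.append x x') ^ 2 ≤ maxSeqNorm m x ^ 2 + maxSeqNorm n x' ^ 2 := by
  set N := maxSeqNorm (m + n) (Fin.append x x') with hN
  have key : ∀ r ∈ FSet m x, ∀ r' ∈ FSet n x', N ^ 2 ≤ r ^ 2 + r' ^ 2 := by
    rintro r ⟨k, α, y, hx, rfl⟩ r' ⟨k', α', y', hx', rfl⟩
    have := app_core α y α' y'
    rw [← hx, ← hx'] at this
    exact this
  have step1 : ∀ r' ∈ FSet n x', N ^ 2 - r' ^ 2 ≤ maxSeqNorm m x ^ 2 := by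
    intro r' h'
    rw [maxSeqNorm_eq m x]
    exact sq_inf_aux (FSet_nonempty x) (FSet_nonneg x) fun r h => by linarith [key r h r' h']
  have step2 : N ^ 2 - maxSeqNorm m x ^ 2 ≤ maxSeqNorm n x' ^ 2 := by
    rw [maxSeqNorm_eq n x']
    exact sq_inf_aux (FSet_nonempty x') (FSet_nonneg x') fun r' h' => by linarith [step1 r' h']
  linarith

lemma maxSeqNorm_smul (n : ℕ) (c : ℂ) (x : Fin n → E) :
    maxSeqNorm n (c • x) = ‖c‖ * maxSeqNorm n x := by
  rcases eq_or_ne c 0 with rfl | hc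
  · rw [zero_smul, maxSeqNorm_zero, norm_zero, zero_mul]
  · refine le_antisymm ?_ ?_
    · have h1 : c • x = matVec (c • (1 : Matrix (Fin n) (Fin n) ℂ)) x := by
        rw [matVec_smul_left, matVec_one]
      calc maxSeqNorm n (c • x) = maxSeqNorm n (matVec (c • (1 : Matrix (Fin n) (Fin n) ℂ)) x) := by
            rw [← h1]
        _ ≤ matOpNorm (c • (1 : Matrix (Fin n) (Fin n) ℂ)) * maxSeqNorm n x :=
            maxSeqNorm_matVec_le _ _
        _ = ‖c‖ * matOpNorm (1 : Matrix (Fin n) (Fin n) ℂ) * maxSeqNorm n x := by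
            rw [matOpNorm_smul]
        _ ≤ ‖c‖ * 1 * maxSeqNorm n x :=
            mul_le_mul_of_nonneg_right
              (mul_le_mul_of_nonneg_left matOpNorm_one_le (norm_nonneg c))
              (maxSeqNorm_nonneg x)
        _ = ‖c‖ * maxSeqNorm n x := by rw [mul_one]
    · have h2 : x = c⁻¹ • (c • x) := by rw [smul_smul, inv_mul_cancel₀ hc, one_smul]
      have h3 : maxSeqNorm n x ≤ ‖c⁻¹‖ * maxSeqNorm n (c • x) := by
        calc maxSeqNorm n x = maxSeqNorm n (c⁻¹ • (c • x)) := by rw [← h2]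
          _ = maxSeqNorm n (matVec (c⁻¹ • (1 : Matrix (Fin n) (Fin n) ℂ)) (c • x)) := by
              rw [matVec_smul_left, matVec_one]
          _ ≤ matOpNorm (c⁻¹ • (1 : Matrix (Fin n) (Fin n) ℂ)) * maxSeqNorm n (c • x) :=
              maxSeqNorm_matVec_le _ _
          _ = ‖c⁻¹‖ * matOpNorm (1 : Matrix (Fin n) (Fin n) ℂ) * maxSeqNorm n (c • x) := by
              rw [matOpNorm_smul]
          _ ≤ ‖c⁻¹‖ * 1 * maxSeqNorm n (c • x) :=
              mul_le_mul_of_nonneg_right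
                (mul_le_mul_of_nonneg_left matOpNorm_one_le (norm_nonneg _))
                (maxSeqNorm_nonneg _)
          _ = ‖c⁻¹‖ * maxSeqNorm n (c • x) := by rw [mul_one]
      have hcc : ‖c‖ * ‖c⁻¹‖ = 1 := by
        rw [norm_inv, mul_inv_cancel₀ (norm_ne_zero_iff.mpr hc)]
      calc ‖c‖ * maxSeqNorm n x ≤ ‖c‖ * (‖c⁻¹‖ * maxSeqNorm n (c • x)) :=
            mul_le_mul_of_nonneg_left h3 (norm_nonneg c)
        _ = (‖c‖ * ‖c⁻¹‖) * maxSeqNorm n (c • x) := by ring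
        _ = maxSeqNorm n (c • x) := by rw [hcc, one_mul]

lemma maxSeqNorm_eq_zero {n : ℕ} {x : Fin n → E} (h : maxSeqNorm n x = 0) : x = 0 := by
  funext i
  have := norm_le_maxSeqNorm x i
  rw [h] at this
  exact norm_le_zero_iff.mp this

end MaxAux

open MaxAux in
/-- the maximal operator sequence norms form a sequential norm over `E`. -/
theorem maxSeqNorm_isSeqNorm (E : Type*) [NormedAddCommGroup E] [NormedSpace ℂ E] :
    ∃ S : SeqNorm E, ∀ (n : ℕ) (x : Fin n → E), S.N n x = maxSeqNorm n x := by
  refine ⟨⟨fun n x => maxSeqNorm n x, maxSeqNorm_one', maxSeqNorm_add_le,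
    maxSeqNorm_smul, fun n x => maxSeqNorm_eq_zero, maxSeqNorm_append_zero,
    maxSeqNorm_append_sq, fun m n β x => maxSeqNorm_matVec_le β x⟩, fun n x => rfl⟩
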